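/- For each of the three bimodule maps v ∈ Hom_{A^e}(P_2, A) given (in the notation v = (v(1⊗r_x⊗1), v(1⊗r_y⊗1))) by v₁ = (y, x), v₂ = (x, 0), v₂' = (0, y), the 1-cochain Δ(v) ∈ Hom_{A^e}(P_1, A) defined by Δ(v)(1⊗x⊗1) = Σ_{b∈B∖{1}} ⟨v(t₁(b⊗x⊗1 + x·C(b))), 1⟩·b* and Δ(v)(1⊗y⊗1) = Σ_{b∈B∖{1}} ⟨v(t₁(b⊗y⊗1 + y·C(b))), 1⟩·b* is a Hochschild coboundary, i.e. it lies in the image of the map Hom_{A^e}(P_0, A) → Hom_{A^e}(P_1, A) given by precomposition with d_1. Hence Δ(v₁) = Δ(v₂) = Δ(v₂') = 0 in HH¹(A). -/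

import Mathlib

open scoped TensorProduct
open MulOpposite

noncomputable section

namespace QP

variable (k : Type*) [Field k]

/-- The generator `x` of the free algebra `k⟨x,y⟩`. -/
def Xg : FreeAlgebra k (Fin 2) := FreeAlgebra.ι k 0
/-- The generator `y` of the free algebra `k⟨x,y⟩`. -/
def Yg : FreeAlgebra k (Fin 2) := FreeAlgebra.ι k 1

/-- The relations `x²+yxy, y²+xyx, x⁴, y⁴` defining `kQ₈` in characteristic 2. -/
inductive QRel : FreeAlgebra k (Fin 2) → FreeAlgebra k (Fin 2) → Prop
  | rx : QRel (Xg k * Xg k + Yg k * Xg k * Yg k) 0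
  | ry : QRel (Yg k * Yg k + Xg k * Yg k * Xg k) 0
  | x4 : QRel (Xg k ^ 4) 0
  | y4 : QRel (Yg k ^ 4) 0

/-- `A = k⟨x,y⟩/(x²+yxy, y²+xyx, x⁴, y⁴)`. -/
abbrev A := RingQuot (QRel k)

/-- The image of `x` in `A`. -/
def x : A k := RingQuot.mkAlgHom k (QRel k) (Xg k)
/-- The image of `y` in `A`. -/
def y : A k := RingQuot.mkAlgHom k (QRel k) (Yg k)

/-- The monomial basis `1, x, y, xy, yx, xyx, yxy, xyxy` of `A`. -/
def mon : Fin 8 → A k :=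
  ![1, x k, y k, x k * y k, y k * x k, x k * y k * x k, y k * x k * y k,
    x k * y k * x k * y k]

/-- The dual family `1* = xyxy, x* = yxy, y* = xyx, (xy)* = xy, (yx)* = yx,
`(xyx)* = y, (yxy)* = x, (xyxy)* = 1`. -/
def dm : Fin 8 → A k :=
  ![mon k 7, mon k 6, mon k 5, mon k 3, mon k 4, mon k 2, mon k 1, mon k 0]

/-- `P₀ = P₃ = P₄ = A ⊗ A`. -/
abbrev AA := A k ⊗[k] A k
/-- `P₁ ≅ (A⊗A)² ≅ A ⊗ kQ₁ ⊗ A` (components: `x`-slot, `y`-slot); likewise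
`P₂ ≅ (A⊗A)² ≅ A ⊗ kQ₁* ⊗ A` (components: `r_x`-slot, `r_y`-slot). -/
abbrev PP := AA k × AA k

/-- Multiplication `A ⊗ A → A`. -/
def mulm : AA k →ₗ[k] A k := LinearMap.mul' k (A k)

/-- `two p q : a⊗b ↦ (a*p)⊗(q*b)`: the bimodule map `A⊗A → A⊗A` determined by
`1⊗1 ↦ p⊗q`. -/
def two (p q : A k) : AA k →ₗ[k] AA k :=
  TensorProduct.map (LinearMap.mulRight k p) (LinearMap.mulLeft k q)

/-- `el p q : a ↦ p⊗(q*a)`: the right `A`-module map `A → A⊗A` determined by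
`1 ↦ p⊗q`. -/
def el (p q : A k) : A k →ₗ[k] AA k :=
  (TensorProduct.mk k (A k) (A k) p).comp (LinearMap.mulLeft k q)

/-- Left multiplication by `a` on `A⊗A`. -/
def lm (a : A k) : AA k →ₗ[k] AA k := LinearMap.rTensor (A k) (LinearMap.mulLeft k a)
/-- Right multiplication by `a` on `A⊗A`. -/
def rm (a : A k) : AA k →ₗ[k] AA k := LinearMap.lTensor (A k) (LinearMap.mulRight k a)
/-- Left multiplication by `a` on `P₁` (or `P₂`). -/
def lmp (a : A k) : PP k →ₗ[k] PP k := (lm k a).prodMap (lm k a)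

/-- The bimodule map `A⊗A → A` determined by `1⊗1 ↦ c`, i.e. `a⊗b ↦ a*c*b`. -/
def bimap (c : A k) : AA k →ₗ[k] A k := (mulm k).comp (two k c 1)

/-- The bimodule map `P₁ → A` (or `P₂ → A`) with values `(c₁, c₂)` on the two
free generators. -/
def pairc (c1 c2 : A k) : PP k →ₗ[k] A k := (bimap k c1).coprod (bimap k c2)

/-- `d₀ : A⊗A → A` is the multiplication. -/
def d0 : AA k →ₗ[k] A k := mulm k

/-- `d₁ : P₁ → P₀`, `1⊗x⊗1 ↦ x⊗1+1⊗x`, `1⊗y⊗1 ↦ y⊗1+1⊗y`. -/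
def d1 : PP k →ₗ[k] AA k :=
  (two k (x k) 1 + two k 1 (x k)).coprod (two k (y k) 1 + two k 1 (y k))

/-- `d₂ : P₂ → P₁`, `1⊗r_x⊗1 ↦ 1⊗x⊗x + x⊗x⊗1 + 1⊗y⊗xy + y⊗x⊗y + yx⊗y⊗1` and
`1⊗r_y⊗1 ↦ 1⊗y⊗y + y⊗y⊗1 + 1⊗x⊗yx + x⊗y⊗x + xy⊗x⊗1`. -/
def d2 : PP k →ₗ[k] PP k :=
  ((two k 1 (x k) + two k (x k) 1 + two k (y k) (y k)).prod
      (two k 1 (x k * y k) + two k (y k * x k) 1)).coprod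
    ((two k 1 (y k * x k) + two k (x k * y k) 1).prod
      (two k 1 (y k) + two k (y k) 1 + two k (x k) (x k)))

/-- `d₃ : P₃ → P₂`, `1⊗1 ↦ x⊗r_x⊗1 + 1⊗r_x⊗x + y⊗r_y⊗1 + 1⊗r_y⊗y`. -/
def d3 : AA k →ₗ[k] PP k :=
  (two k (x k) 1 + two k 1 (x k)).prod (two k (y k) 1 + two k 1 (y k))

/-- `ρ : A → A⊗A`, `1 ↦ Σ_{b∈B} b*⊗b`. -/
def rho : A k →ₗ[k] AA k :=
  ∑ i : Fin 8,
    (((TensorProduct.mk k (A k) (A k)).flip (mon k i)).comp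
      (LinearMap.mulRight k (dm k i)))

/-- `d₄ = ρ ∘ d₀ : P₄ → P₃`. -/
def d4 : AA k →ₗ[k] AA k := (rho k).comp (d0 k)

variable {k}

/-- The right `A`-module map `A⊗A → V` sending `b⊗a ↦ g_b(a)` for `b` running
through the monomial basis `bb`. -/
def rext {V : Type*} [AddCommGroup V] [Module k V] (bb : Module.Basis (Fin 8) k (A k))
    (g : Fin 8 → (A k →ₗ[k] V)) : AA k →ₗ[k] V :=
  TensorProduct.lift (bb.constr k g)

variable (k)

/-- `t₋₁ : A → A⊗A`, `a ↦ 1⊗a`. -/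
def tneg : A k →ₗ[k] AA k := TensorProduct.mk k (A k) (A k) 1

/-- `C(b) ∈ P₁` for `b` in the monomial basis: the bimodule derivation applied
to the basis monomials. -/
def Cm : Fin 8 → PP k :=
  ![0,
    (1 ⊗ₜ 1, 0),
    (0, 1 ⊗ₜ 1),
    (1 ⊗ₜ y k, x k ⊗ₜ 1),
    (y k ⊗ₜ 1, 1 ⊗ₜ x k),
    (1 ⊗ₜ (y k * x k) + (x k * y k) ⊗ₜ 1, x k ⊗ₜ x k),
    (y k ⊗ₜ y k, 1 ⊗ₜ (x k * y k) + (y k * x k) ⊗ₜ 1),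
    (1 ⊗ₜ (y k * x k * y k) + (x k * y k) ⊗ₜ y k,
      x k ⊗ₜ (x k * y k) + (x k * y k * x k) ⊗ₜ 1)]

variable {k}

/-- `t₀ : P₀ → P₁`, `b⊗1 ↦ C(b)`, a right `A`-module map. -/
def t0 (bb : Module.Basis (Fin 8) k (A k)) : AA k →ₗ[k] PP k :=
  rext (V := PP k) bb
    ![0,
      (el k 1 1).prod 0,
      LinearMap.prod 0 (el k 1 1),
      (el k 1 (y k)).prod (el k (x k) 1),
      (el k (y k) 1).prod (el k 1 (x k)),
      (el k 1 (y k * x k) + el k (x k * y k) 1).prod (el k (x k) (x k)),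
      (el k (y k) (y k)).prod (el k 1 (x k * y k) + el k (y k * x k) 1),
      (el k 1 (y k * x k * y k) + el k (x k * y k) (y k)).prod
        (el k (x k) (x k * y k) + el k (x k * y k * x k) 1)]

/-- `t₁ : P₁ → P₂`, the right `A`-module map from the table in the paper. -/
def t1 (bb : Module.Basis (Fin 8) k (A k)) : PP k →ₗ[k] PP k :=
  (rext (V := PP k) bb
    ![0,
      (el k 1 1).prod 0,
      0,
      0,
      (el k (y k) 1 + el k (x k * y k) (y k)).prod (el k 1 (x k * y k)),
      (el k (x k * y k) 1).prod (el k (x k) (x k * y k)),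
      LinearMap.prod 0 (el k 1 (y k) + el k (y k) 1),
      (el k 1 (y k * x k * y k) + el k (x k) (x k) + el k (y k * x k * y k) 1).prod
        (el k (y k * x k) (x k * y k))]).coprod
  (rext (V := PP k) bb
    ![0,
      0,
      LinearMap.prod 0 (el k 1 1),
      (el k 1 (y k * x k)).prod (el k (x k) 1 + el k (y k * x k) (x k)),
      0,
      0,
      (el k (y k) (y k * x k)).prod (el k (y k * x k) 1),
      (el k (x k * y k) (y k * x k)).prod (el k (x k * y k * x k) 1)])

/-- `t₂ : P₂ → P₃`, the right `A`-module map from the table in the paper. -/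
def t2 (bb : Module.Basis (Fin 8) k (A k)) : PP k →ₗ[k] AA k :=
  (rext (V := AA k) bb
    ![0,
      el k 1 1,
      0,
      0,
      el k (y k) 1,
      el k (x k * y k) 1 + el k (x k) (y k),
      el k 1 (x k),
      el k 1 (y k * x k * y k) + el k (y k * x k * y k) 1 + el k (y k) (x k * y k)
        + el k (y k * x k) (y k)]).coprod
  (rext (V := AA k) bb
    ![0,
      0,
      0,
      el k (x k) 1,
      0,
      0,
      el k (y k) (x k) + el k (y k * x k) 1,
      el k (x k) (y k * x k) + el k (x k * y k) (x k) + el k (x k * y k * x k) 1])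

/-- `τ : P₃ → A`, `xyxy⊗1 ↦ 1`, `b⊗1 ↦ 0` for the other basis monomials. -/
def tau (bb : Module.Basis (Fin 8) k (A k)) : AA k →ₗ[k] A k :=
  rext bb ![0, 0, 0, 0, 0, 0, 0, LinearMap.id]

/-- `t₃ = t₋₁ ∘ τ : P₃ → P₄`. -/
def t3 (bb : Module.Basis (Fin 8) k (A k)) : AA k →ₗ[k] AA k := (tneg k).comp (tau bb)

/-- `Ψ₁(1⊗c⊗1) = t₀(c⊗1)`. -/
def psi1 (bb : Module.Basis (Fin 8) k (A k)) (c : A k) : PP k := t0 bb (c ⊗ₜ 1)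
/-- `Ψ₂(1⊗b⊗c⊗1) = t₁(b·Ψ₁(1⊗c⊗1))`. -/
def psi2 (bb : Module.Basis (Fin 8) k (A k)) (b c : A k) : PP k := t1 bb (lmp k b (psi1 bb c))
/-- `Ψ₃(1⊗a⊗b⊗c⊗1) = t₂(a·Ψ₂(1⊗b⊗c⊗1))`. -/
def psi3 (bb : Module.Basis (Fin 8) k (A k)) (a b c : A k) : AA k :=
  t2 bb (lmp k a (psi2 bb b c))
/-- `Ψ₄(1⊗a₀⊗a⊗b⊗c⊗1) = t₃(a₀·Ψ₃(1⊗a⊗b⊗c⊗1))`. -/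
def psi4 (bb : Module.Basis (Fin 8) k (A k)) (a0 a b c : A k) : AA k :=
  t3 bb (lm k a0 (psi3 bb a b c))

/-- The symmetrizing bilinear form: `⟨a,b⟩` is the coefficient of `xyxy` in
`a*b`; on basis monomials it is `1` iff `b₁b₂ = xyxy` and `0` otherwise. -/
def bform (bb : Module.Basis (Fin 8) k (A k)) (a b : A k) : k := bb.repr (a * b) 7

end QP

open QP

namespace QP
variable {k : Type} [Field k]

lemma two_zero [CharP k 2] : (2 : k) = 0 := by exact_mod_cast CharP.cast_eq_zero k 2

lemma addself [CharP k 2] (a : A k) : a + a = 0 := by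
  rw [← two_smul k a, two_zero, zero_smul]

lemma eq_of_addeq [CharP k 2] {a b : A k} (h : a + b = 0) : a = b := by
  rw [← add_zero a, ← addself b, ← add_assoc, h, zero_add]

lemma rel_xx : x k * x k + y k * (x k * y k) = 0 := by
  have h := RingQuot.mkAlgHom_rel k (QRel.rx (k := k))
  simp only [map_add, map_mul, map_zero] at h
  rw [← h, x, y, mul_assoc]

lemma rel_yy : y k * y k + x k * (y k * x k) = 0 := by
  have h := RingQuot.mkAlgHom_rel k (QRel.ry (k := k))
  simp only [map_add, map_mul, map_zero] at h
  rw [← h, x, y, mul_assoc]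

lemma hxx [CharP k 2] : x k * x k = y k * (x k * y k) := eq_of_addeq rel_xx
lemma hyy [CharP k 2] : y k * y k = x k * (y k * x k) := eq_of_addeq rel_yy

lemma x4 : x k ^ 4 = 0 := by
  have h := RingQuot.mkAlgHom_rel k (QRel.x4 (k := k))
  simp only [map_pow, map_zero] at h
  rw [x]; exact h

lemma y4 : y k ^ 4 = 0 := by
  have h := RingQuot.mkAlgHom_rel k (QRel.y4 (k := k))
  simp only [map_pow, map_zero] at h
  rw [y]; exact h

lemma hxxT [CharP k 2] (t : A k) : x k * (x k * t) = y k * (x k * (y k * t)) := by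
  rw [← mul_assoc, hxx]; noncomm_ring

lemma hyyT [CharP k 2] (t : A k) : y k * (y k * t) = x k * (y k * (x k * t)) := by
  rw [← mul_assoc, hyy]; noncomm_ring

lemma hx4T (t : A k) : x k * (x k * (x k * (x k * t))) = 0 := by
  have : x k * (x k * (x k * (x k * t))) = x k ^ 4 * t := by
    rw [pow_succ, pow_succ, pow_two]; noncomm_ring
  rw [this, x4, zero_mul]

lemma hy4T (t : A k) : y k * (y k * (y k * (y k * t))) = 0 := by
  have : y k * (y k * (y k * (y k * t))) = y k ^ 4 * t := by
    rw [pow_succ, pow_succ, pow_two]; noncomm_ring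
  rw [this, y4, zero_mul]

lemma mulc (a : A k) {u v : A k} (h : u = v) : a * u = a * v := by rw [h]

lemma A1 [CharP k 2] (t : A k) : x k * (x k * (y k * t)) = 0 := by
  calc x k * (x k * (y k * t))
      = y k * (x k * (y k * (y k * t))) := hxxT _
    _ = y k * (x k * (x k * (y k * (x k * t)))) := mulc _ (mulc _ (hyyT t))
    _ = y k * (y k * (x k * (y k * (y k * (x k * t))))) := mulc _ (hxxT _)
    _ = x k * (y k * (x k * (x k * (y k * (y k * (x k * t)))))) := hyyT _
    _ = x k * (y k * (y k * (x k * (y k * (y k * (y k * (x k * t))))))) :=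
        mulc _ (mulc _ (hxxT _))
    _ = x k * (x k * (y k * (x k * (x k * (y k * (y k * (y k * (x k * t)))))))) :=
        mulc _ (hyyT _)
    _ = x k * (x k * (y k * (y k * (x k * (y k * (y k * (y k * (y k * (x k * t))))))))) :=
        mulc _ (mulc _ (mulc _ (hxxT _)))
    _ = x k * (x k * (y k * (y k * (x k * 0)))) :=
        mulc _ (mulc _ (mulc _ (mulc _ (mulc _ (hy4T _)))))
    _ = 0 := by simp

lemma A2 [CharP k 2] (t : A k) : y k * (y k * (x k * t)) = 0 := by
  calc y k * (y k * (x k * t))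
      = x k * (y k * (x k * (x k * t))) := hyyT _
    _ = x k * (y k * (y k * (x k * (y k * t)))) := mulc _ (mulc _ (hxxT t))
    _ = x k * (x k * (y k * (x k * (x k * (y k * t))))) := mulc _ (hyyT _)
    _ = y k * (x k * (y k * (y k * (x k * (x k * (y k * t)))))) := hxxT _
    _ = y k * (x k * (x k * (y k * (x k * (x k * (x k * (y k * t))))))) :=
        mulc _ (mulc _ (hyyT _))
    _ = y k * (y k * (x k * (y k * (y k * (x k * (x k * (x k * (y k * t)))))))) :=
        mulc _ (hxxT _)
    _ = y k * (y k * (x k * (x k * (y k * (x k * (x k * (x k * (x k * (y k * t))))))))) :=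
        mulc _ (mulc _ (mulc _ (hyyT _)))
    _ = y k * (y k * (x k * (x k * (y k * 0)))) :=
        mulc _ (mulc _ (mulc _ (mulc _ (mulc _ (hx4T _)))))
    _ = 0 := by simp

lemma A5 [CharP k 2] (t : A k) : x k * (y k * (x k * (y k * (x k * t)))) = 0 := by
  rw [← hxxT (x k * t)]; exact hx4T t

lemma A6 [CharP k 2] (t : A k) : y k * (x k * (y k * (x k * (y k * t)))) = 0 := by
  rw [← hyyT (y k * t)]; exact hy4T t

lemma A1' [CharP k 2] : x k * (x k * y k) = 0 := by
  have := A1 (k := k) 1; rwa [mul_one] at this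
lemma A2' [CharP k 2] : y k * (y k * x k) = 0 := by
  have := A2 (k := k) 1; rwa [mul_one] at this
lemma A5' [CharP k 2] : x k * (y k * (x k * (y k * x k))) = 0 := by
  have := A5 (k := k) 1; rwa [mul_one] at this
lemma A6' [CharP k 2] : y k * (x k * (y k * (x k * y k))) = 0 := by
  have := A6 (k := k) 1; rwa [mul_one] at this

lemma hyxyxT [CharP k 2] (t : A k) :
    y k * (x k * (y k * (x k * t))) = x k * (y k * (x k * (y k * t))) := by
  rw [← hxxT (x k * t)]; exact mulc _ (hxxT t)

lemma hyxyx' [CharP k 2] : y k * (x k * (y k * x k)) = x k * (y k * (x k * y k)) := by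
  have := hyxyxT (k := k) 1; rwa [mul_one, mul_one] at this

end QP
set_option linter.unusedSectionVars false
namespace QP
variable {k : Type} [Field k]

lemma vec8_0 {α : Type*} (a0 a1 a2 a3 a4 a5 a6 a7 : α) :
    ![a0,a1,a2,a3,a4,a5,a6,a7] (0:Fin 8) = a0 := rfl
lemma vec8_1 {α : Type*} (a0 a1 a2 a3 a4 a5 a6 a7 : α) :
    ![a0,a1,a2,a3,a4,a5,a6,a7] (1:Fin 8) = a1 := rfl
lemma vec8_2 {α : Type*} (a0 a1 a2 a3 a4 a5 a6 a7 : α) :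
    ![a0,a1,a2,a3,a4,a5,a6,a7] (2:Fin 8) = a2 := rfl
lemma vec8_3 {α : Type*} (a0 a1 a2 a3 a4 a5 a6 a7 : α) :
    ![a0,a1,a2,a3,a4,a5,a6,a7] (3:Fin 8) = a3 := rfl
lemma vec8_4 {α : Type*} (a0 a1 a2 a3 a4 a5 a6 a7 : α) :
    ![a0,a1,a2,a3,a4,a5,a6,a7] (4:Fin 8) = a4 := rfl
lemma vec8_5 {α : Type*} (a0 a1 a2 a3 a4 a5 a6 a7 : α) :
    ![a0,a1,a2,a3,a4,a5,a6,a7] (5:Fin 8) = a5 := rfl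
lemma vec8_6 {α : Type*} (a0 a1 a2 a3 a4 a5 a6 a7 : α) :
    ![a0,a1,a2,a3,a4,a5,a6,a7] (6:Fin 8) = a6 := rfl
lemma vec8_7 {α : Type*} (a0 a1 a2 a3 a4 a5 a6 a7 : α) :
    ![a0,a1,a2,a3,a4,a5,a6,a7] (7:Fin 8) = a7 := rfl

variable (bb : Module.Basis (Fin 8) k (A k))

lemma rext_mon (hbb : ∀ i, bb i = mon k i) {V : Type} [AddCommGroup V] [Module k V]
    (g : Fin 8 → (A k →ₗ[k] V)) (i : Fin 8) (a : A k) :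
    rext bb g (mon k i ⊗ₜ a) = g i a := by
  rw [← hbb i]; simp [rext, Module.Basis.constr_basis]

section W
variable (hbb : ∀ i, bb i = mon k i) {V : Type} [AddCommGroup V] [Module k V]
  (g : Fin 8 → (A k →ₗ[k] V)) (a : A k)
include hbb

lemma rext_w0 : rext bb g ((1 : A k) ⊗ₜ a) = g 0 a := rext_mon bb hbb g 0 a
lemma rext_w1 : rext bb g (x k ⊗ₜ a) = g 1 a := rext_mon bb hbb g 1 a
lemma rext_w2 : rext bb g (y k ⊗ₜ a) = g 2 a := rext_mon bb hbb g 2 a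
lemma rext_w3 : rext bb g ((x k * y k) ⊗ₜ a) = g 3 a := rext_mon bb hbb g 3 a
lemma rext_w4 : rext bb g ((y k * x k) ⊗ₜ a) = g 4 a := rext_mon bb hbb g 4 a
lemma rext_w5 : rext bb g ((x k * (y k * x k)) ⊗ₜ a) = g 5 a := by
  rw [show x k * (y k * x k) = mon k 5 by show _ = x k * y k * x k; rw [mul_assoc]]
  exact rext_mon bb hbb g 5 a
lemma rext_w6 : rext bb g ((y k * (x k * y k)) ⊗ₜ a) = g 6 a := by
  rw [show y k * (x k * y k) = mon k 6 by show _ = y k * x k * y k; rw [mul_assoc]]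
  exact rext_mon bb hbb g 6 a
lemma rext_w7 : rext bb g ((x k * (y k * (x k * y k))) ⊗ₜ a) = g 7 a := by
  rw [show x k * (y k * (x k * y k)) = mon k 7 by
    show _ = x k * y k * x k * y k; rw [mul_assoc, mul_assoc]]
  exact rext_mon bb hbb g 7 a

end W

section BF
variable (hbb : ∀ i, bb i = mon k i)
include hbb

lemma bform_add (a b c : A k) : bform bb (a + b) c = bform bb a c + bform bb b c := by
  simp [bform, add_mul]

lemma bform_zero (c : A k) : bform bb 0 c = 0 := by simp [bform]

lemma bform_mon (i : Fin 8) : bform bb (mon k i) 1 = if i = 7 then 1 else 0 := by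
  rw [bform, mul_one, ← hbb i, Module.Basis.repr_self, Finsupp.single_apply]

lemma bform_w0 : bform bb (1 : A k) 1 = 0 := by simpa [mon] using bform_mon bb hbb 0
lemma bform_w1 : bform bb (x k) 1 = 0 := by simpa [mon] using bform_mon bb hbb 1
lemma bform_w2 : bform bb (y k) 1 = 0 := by simpa [mon] using bform_mon bb hbb 2
lemma bform_w3 : bform bb (x k * y k) 1 = 0 := by simpa [mon] using bform_mon bb hbb 3
lemma bform_w4 : bform bb (y k * x k) 1 = 0 := by simpa [mon] using bform_mon bb hbb 4
lemma bform_w5 : bform bb (x k * (y k * x k)) 1 = 0 := by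
  rw [show x k * (y k * x k) = mon k 5 by show _ = x k * y k * x k; rw [mul_assoc]]
  simpa using bform_mon bb hbb 5
lemma bform_w6 : bform bb (y k * (x k * y k)) 1 = 0 := by
  rw [show y k * (x k * y k) = mon k 6 by show _ = y k * x k * y k; rw [mul_assoc]]
  simpa using bform_mon bb hbb 6
lemma bform_w7 : bform bb (x k * (y k * (x k * y k))) 1 = 1 := by
  rw [show x k * (y k * (x k * y k)) = mon k 7 by
    show _ = x k * y k * x k * y k; rw [mul_assoc, mul_assoc]]
  simpa using bform_mon bb hbb 7

end BF
end QP
namespace QP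
variable {k : Type} [Field k] [CharP k 2] (bb : Module.Basis (Fin 8) k (A k))
  (hbb : ∀ i, bb i = mon k i)
include hbb

lemma Tx0 : t1 bb ((mon k 0 ⊗ₜ[k] (1 : A k), 0) + lmp k (x k) (Cm k 0)) = (0 : PP k) := by
  simp only [Cm, mon, vec8_0, vec8_1, vec8_2, vec8_3, vec8_4, vec8_5, vec8_6, vec8_7,
    lmp, lm, LinearMap.prodMap_apply, LinearMap.rTensor_tmul, LinearMap.mulLeft_apply,
    Prod.mk_add_mk, map_add, map_zero, add_zero, zero_add,
    mul_assoc, A1, A1', A2, A2', A5, A5', A6, A6', hyxyxT, hyxyx', hxx, hyy,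
    mul_zero, zero_mul, mul_one, one_mul, TensorProduct.zero_tmul, TensorProduct.add_tmul,
    t1, LinearMap.coprod_apply,
    rext_w0 bb hbb, rext_w1 bb hbb, rext_w2 bb hbb, rext_w3 bb hbb, rext_w4 bb hbb,
    rext_w5 bb hbb, rext_w6 bb hbb, rext_w7 bb hbb,
    LinearMap.add_apply, LinearMap.prod_apply, LinearMap.zero_apply, Pi.prod,
    el, LinearMap.comp_apply, TensorProduct.mk_apply,
    TensorProduct.tmul_add, TensorProduct.tmul_zero]

lemma Ty0 : t1 bb ((0, mon k 0 ⊗ₜ[k] (1 : A k)) + lmp k (y k) (Cm k 0)) = (0 : PP k) := by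
  simp only [Cm, mon, vec8_0, vec8_1, vec8_2, vec8_3, vec8_4, vec8_5, vec8_6, vec8_7,
    lmp, lm, LinearMap.prodMap_apply, LinearMap.rTensor_tmul, LinearMap.mulLeft_apply,
    Prod.mk_add_mk, map_add, map_zero, add_zero, zero_add,
    mul_assoc, A1, A1', A2, A2', A5, A5', A6, A6', hyxyxT, hyxyx', hxx, hyy,
    mul_zero, zero_mul, mul_one, one_mul, TensorProduct.zero_tmul, TensorProduct.add_tmul,
    t1, LinearMap.coprod_apply,
    rext_w0 bb hbb, rext_w1 bb hbb, rext_w2 bb hbb, rext_w3 bb hbb, rext_w4 bb hbb,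
    rext_w5 bb hbb, rext_w6 bb hbb, rext_w7 bb hbb,
    LinearMap.add_apply, LinearMap.prod_apply, LinearMap.zero_apply, Pi.prod,
    el, LinearMap.comp_apply, TensorProduct.mk_apply,
    TensorProduct.tmul_add, TensorProduct.tmul_zero]

lemma Tx1 : t1 bb ((mon k 1 ⊗ₜ[k] (1 : A k), 0) + lmp k (x k) (Cm k 1)) = ((1:A k) ⊗ₜ[k] (1:A k) + 1 ⊗ₜ[k] 1, 0) := by
  simp only [Cm, mon, vec8_0, vec8_1, vec8_2, vec8_3, vec8_4, vec8_5, vec8_6, vec8_7,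
    lmp, lm, LinearMap.prodMap_apply, LinearMap.rTensor_tmul, LinearMap.mulLeft_apply,
    Prod.mk_add_mk, map_add, map_zero, add_zero, zero_add,
    mul_assoc, A1, A1', A2, A2', A5, A5', A6, A6', hyxyxT, hyxyx', hxx, hyy,
    mul_zero, zero_mul, mul_one, one_mul, TensorProduct.zero_tmul, TensorProduct.add_tmul,
    t1, LinearMap.coprod_apply,
    rext_w0 bb hbb, rext_w1 bb hbb, rext_w2 bb hbb, rext_w3 bb hbb, rext_w4 bb hbb,
    rext_w5 bb hbb, rext_w6 bb hbb, rext_w7 bb hbb,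
    LinearMap.add_apply, LinearMap.prod_apply, LinearMap.zero_apply, Pi.prod, Function.prod,
    el, LinearMap.comp_apply, TensorProduct.mk_apply,
    TensorProduct.tmul_add, TensorProduct.tmul_zero]

lemma Ty1 : t1 bb ((0, mon k 1 ⊗ₜ[k] (1 : A k)) + lmp k (y k) (Cm k 1)) = (0 : PP k) := by
  simp only [Cm, mon, vec8_0, vec8_1, vec8_2, vec8_3, vec8_4, vec8_5, vec8_6, vec8_7,
    lmp, lm, LinearMap.prodMap_apply, LinearMap.rTensor_tmul, LinearMap.mulLeft_apply,
    Prod.mk_add_mk, map_add, map_zero, add_zero, zero_add,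
    mul_assoc, A1, A1', A2, A2', A5, A5', A6, A6', hyxyxT, hyxyx', hxx, hyy,
    mul_zero, zero_mul, mul_one, one_mul, TensorProduct.zero_tmul, TensorProduct.add_tmul,
    t1, LinearMap.coprod_apply,
    rext_w0 bb hbb, rext_w1 bb hbb, rext_w2 bb hbb, rext_w3 bb hbb, rext_w4 bb hbb,
    rext_w5 bb hbb, rext_w6 bb hbb, rext_w7 bb hbb,
    LinearMap.add_apply, LinearMap.prod_apply, LinearMap.zero_apply, Pi.prod,
    el, LinearMap.comp_apply, TensorProduct.mk_apply,
    TensorProduct.tmul_add, TensorProduct.tmul_zero]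

lemma Tx2 : t1 bb ((mon k 2 ⊗ₜ[k] (1 : A k), 0) + lmp k (x k) (Cm k 2)) = (0 : PP k) := by
  simp only [Cm, mon, vec8_0, vec8_1, vec8_2, vec8_3, vec8_4, vec8_5, vec8_6, vec8_7,
    lmp, lm, LinearMap.prodMap_apply, LinearMap.rTensor_tmul, LinearMap.mulLeft_apply,
    Prod.mk_add_mk, map_add, map_zero, add_zero, zero_add,
    mul_assoc, A1, A1', A2, A2', A5, A5', A6, A6', hyxyxT, hyxyx', hxx, hyy,
    mul_zero, zero_mul, mul_one, one_mul, TensorProduct.zero_tmul, TensorProduct.add_tmul,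
    t1, LinearMap.coprod_apply,
    rext_w0 bb hbb, rext_w1 bb hbb, rext_w2 bb hbb, rext_w3 bb hbb, rext_w4 bb hbb,
    rext_w5 bb hbb, rext_w6 bb hbb, rext_w7 bb hbb,
    LinearMap.add_apply, LinearMap.prod_apply, LinearMap.zero_apply, Pi.prod,
    el, LinearMap.comp_apply, TensorProduct.mk_apply,
    TensorProduct.tmul_add, TensorProduct.tmul_zero]

lemma Ty2 : t1 bb ((0, mon k 2 ⊗ₜ[k] (1 : A k)) + lmp k (y k) (Cm k 2)) = ((0 : AA k), (1:A k) ⊗ₜ[k] (1:A k) + 1 ⊗ₜ[k] 1) := by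
  simp only [Cm, mon, vec8_0, vec8_1, vec8_2, vec8_3, vec8_4, vec8_5, vec8_6, vec8_7,
    lmp, lm, LinearMap.prodMap_apply, LinearMap.rTensor_tmul, LinearMap.mulLeft_apply,
    Prod.mk_add_mk, map_add, map_zero, add_zero, zero_add,
    mul_assoc, A1, A1', A2, A2', A5, A5', A6, A6', hyxyxT, hyxyx', hxx, hyy,
    mul_zero, zero_mul, mul_one, one_mul, TensorProduct.zero_tmul, TensorProduct.add_tmul,
    t1, LinearMap.coprod_apply,
    rext_w0 bb hbb, rext_w1 bb hbb, rext_w2 bb hbb, rext_w3 bb hbb, rext_w4 bb hbb,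
    rext_w5 bb hbb, rext_w6 bb hbb, rext_w7 bb hbb,
    LinearMap.add_apply, LinearMap.prod_apply, LinearMap.zero_apply, Pi.prod, Function.prod,
    el, LinearMap.comp_apply, TensorProduct.mk_apply,
    TensorProduct.tmul_add, TensorProduct.tmul_zero]

lemma Tx3 : t1 bb ((mon k 3 ⊗ₜ[k] (1 : A k), 0) + lmp k (x k) (Cm k 3)) = ((1:A k) ⊗ₜ[k] y k + y k ⊗ₜ[k] (y k * x k), (y k * x k) ⊗ₜ[k] (1:A k)) := by
  simp only [Cm, mon, vec8_0, vec8_1, vec8_2, vec8_3, vec8_4, vec8_5, vec8_6, vec8_7,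
    lmp, lm, LinearMap.prodMap_apply, LinearMap.rTensor_tmul, LinearMap.mulLeft_apply,
    Prod.mk_add_mk, map_add, map_zero, add_zero, zero_add,
    mul_assoc, A1, A1', A2, A2', A5, A5', A6, A6', hyxyxT, hyxyx', hxx, hyy,
    mul_zero, zero_mul, mul_one, one_mul, TensorProduct.zero_tmul, TensorProduct.add_tmul,
    t1, LinearMap.coprod_apply,
    rext_w0 bb hbb, rext_w1 bb hbb, rext_w2 bb hbb, rext_w3 bb hbb, rext_w4 bb hbb,
    rext_w5 bb hbb, rext_w6 bb hbb, rext_w7 bb hbb,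
    LinearMap.add_apply, LinearMap.prod_apply, LinearMap.zero_apply, Pi.prod, Function.prod,
    el, LinearMap.comp_apply, TensorProduct.mk_apply,
    TensorProduct.tmul_add, TensorProduct.tmul_zero]

lemma Ty3 : t1 bb ((0, mon k 3 ⊗ₜ[k] (1 : A k)) + lmp k (y k) (Cm k 3)) = ((1:A k) ⊗ₜ[k] (y k * x k), x k ⊗ₜ[k] (1:A k) + (y k * x k) ⊗ₜ[k] x k) := by
  simp only [Cm, mon, vec8_0, vec8_1, vec8_2, vec8_3, vec8_4, vec8_5, vec8_6, vec8_7,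
    lmp, lm, LinearMap.prodMap_apply, LinearMap.rTensor_tmul, LinearMap.mulLeft_apply,
    Prod.mk_add_mk, map_add, map_zero, add_zero, zero_add,
    mul_assoc, A1, A1', A2, A2', A5, A5', A6, A6', hyxyxT, hyxyx', hxx, hyy,
    mul_zero, zero_mul, mul_one, one_mul, TensorProduct.zero_tmul, TensorProduct.add_tmul,
    t1, LinearMap.coprod_apply,
    rext_w0 bb hbb, rext_w1 bb hbb, rext_w2 bb hbb, rext_w3 bb hbb, rext_w4 bb hbb,
    rext_w5 bb hbb, rext_w6 bb hbb, rext_w7 bb hbb,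
    LinearMap.add_apply, LinearMap.prod_apply, LinearMap.zero_apply, Pi.prod, Function.prod,
    el, LinearMap.comp_apply, TensorProduct.mk_apply,
    TensorProduct.tmul_add, TensorProduct.tmul_zero]

lemma Tx4 : t1 bb ((mon k 4 ⊗ₜ[k] (1 : A k), 0) + lmp k (x k) (Cm k 4)) = (y k ⊗ₜ[k] (1:A k) + (x k * y k) ⊗ₜ[k] y k, (1:A k) ⊗ₜ[k] (x k * y k)) := by
  simp only [Cm, mon, vec8_0, vec8_1, vec8_2, vec8_3, vec8_4, vec8_5, vec8_6, vec8_7,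
    lmp, lm, LinearMap.prodMap_apply, LinearMap.rTensor_tmul, LinearMap.mulLeft_apply,
    Prod.mk_add_mk, map_add, map_zero, add_zero, zero_add,
    mul_assoc, A1, A1', A2, A2', A5, A5', A6, A6', hyxyxT, hyxyx', hxx, hyy,
    mul_zero, zero_mul, mul_one, one_mul, TensorProduct.zero_tmul, TensorProduct.add_tmul,
    t1, LinearMap.coprod_apply,
    rext_w0 bb hbb, rext_w1 bb hbb, rext_w2 bb hbb, rext_w3 bb hbb, rext_w4 bb hbb,
    rext_w5 bb hbb, rext_w6 bb hbb, rext_w7 bb hbb,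
    LinearMap.add_apply, LinearMap.prod_apply, LinearMap.zero_apply, Pi.prod, Function.prod,
    el, LinearMap.comp_apply, TensorProduct.mk_apply,
    TensorProduct.tmul_add, TensorProduct.tmul_zero]

lemma Ty4 : t1 bb ((0, mon k 4 ⊗ₜ[k] (1 : A k)) + lmp k (y k) (Cm k 4)) = ((x k * y k) ⊗ₜ[k] (1:A k), x k ⊗ₜ[k] (x k * y k) + (1:A k) ⊗ₜ[k] x k) := by
  simp only [Cm, mon, vec8_0, vec8_1, vec8_2, vec8_3, vec8_4, vec8_5, vec8_6, vec8_7,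
    lmp, lm, LinearMap.prodMap_apply, LinearMap.rTensor_tmul, LinearMap.mulLeft_apply,
    Prod.mk_add_mk, map_add, map_zero, add_zero, zero_add,
    mul_assoc, A1, A1', A2, A2', A5, A5', A6, A6', hyxyxT, hyxyx', hxx, hyy,
    mul_zero, zero_mul, mul_one, one_mul, TensorProduct.zero_tmul, TensorProduct.add_tmul,
    t1, LinearMap.coprod_apply,
    rext_w0 bb hbb, rext_w1 bb hbb, rext_w2 bb hbb, rext_w3 bb hbb, rext_w4 bb hbb,
    rext_w5 bb hbb, rext_w6 bb hbb, rext_w7 bb hbb,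
    LinearMap.add_apply, LinearMap.prod_apply, LinearMap.zero_apply, Pi.prod, Function.prod,
    el, LinearMap.comp_apply, TensorProduct.mk_apply,
    TensorProduct.tmul_add, TensorProduct.tmul_zero]

lemma Tx5 : t1 bb ((mon k 5 ⊗ₜ[k] (1 : A k), 0) + lmp k (x k) (Cm k 5)) = ((x k * y k) ⊗ₜ[k] (1:A k) + (1:A k) ⊗ₜ[k] (y k * x k), x k ⊗ₜ[k] (x k * y k) + (y k * x k) ⊗ₜ[k] x k) := by
  simp only [Cm, mon, vec8_0, vec8_1, vec8_2, vec8_3, vec8_4, vec8_5, vec8_6, vec8_7,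
    lmp, lm, LinearMap.prodMap_apply, LinearMap.rTensor_tmul, LinearMap.mulLeft_apply,
    Prod.mk_add_mk, map_add, map_zero, add_zero, zero_add,
    mul_assoc, A1, A1', A2, A2', A5, A5', A6, A6', hyxyxT, hyxyx', hxx, hyy,
    mul_zero, zero_mul, mul_one, one_mul, TensorProduct.zero_tmul, TensorProduct.add_tmul,
    t1, LinearMap.coprod_apply,
    rext_w0 bb hbb, rext_w1 bb hbb, rext_w2 bb hbb, rext_w3 bb hbb, rext_w4 bb hbb,
    rext_w5 bb hbb, rext_w6 bb hbb, rext_w7 bb hbb,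
    LinearMap.add_apply, LinearMap.prod_apply, LinearMap.zero_apply, Pi.prod, Function.prod,
    el, LinearMap.comp_apply, TensorProduct.mk_apply,
    TensorProduct.tmul_add, TensorProduct.tmul_zero]

lemma Ty5 : t1 bb ((0, mon k 5 ⊗ₜ[k] (1 : A k)) + lmp k (y k) (Cm k 5)) = ((0 : AA k), (1:A k) ⊗ₜ[k] y k + y k ⊗ₜ[k] (1:A k)) := by
  simp only [Cm, mon, vec8_0, vec8_1, vec8_2, vec8_3, vec8_4, vec8_5, vec8_6, vec8_7,
    lmp, lm, LinearMap.prodMap_apply, LinearMap.rTensor_tmul, LinearMap.mulLeft_apply,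
    Prod.mk_add_mk, map_add, map_zero, add_zero, zero_add,
    mul_assoc, A1, A1', A2, A2', A5, A5', A6, A6', hyxyxT, hyxyx', hxx, hyy,
    mul_zero, zero_mul, mul_one, one_mul, TensorProduct.zero_tmul, TensorProduct.add_tmul,
    t1, LinearMap.coprod_apply,
    rext_w0 bb hbb, rext_w1 bb hbb, rext_w2 bb hbb, rext_w3 bb hbb, rext_w4 bb hbb,
    rext_w5 bb hbb, rext_w6 bb hbb, rext_w7 bb hbb,
    LinearMap.add_apply, LinearMap.prod_apply, LinearMap.zero_apply, Pi.prod, Function.prod,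
    el, LinearMap.comp_apply, TensorProduct.mk_apply,
    TensorProduct.tmul_add, TensorProduct.tmul_zero]

lemma Tx6 : t1 bb ((mon k 6 ⊗ₜ[k] (1 : A k), 0) + lmp k (x k) (Cm k 6)) = ((0 : AA k), (1:A k) ⊗ₜ[k] y k + y k ⊗ₜ[k] (1:A k)) := by
  simp only [Cm, mon, vec8_0, vec8_1, vec8_2, vec8_3, vec8_4, vec8_5, vec8_6, vec8_7,
    lmp, lm, LinearMap.prodMap_apply, LinearMap.rTensor_tmul, LinearMap.mulLeft_apply,
    Prod.mk_add_mk, map_add, map_zero, add_zero, zero_add,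
    mul_assoc, A1, A1', A2, A2', A5, A5', A6, A6', hyxyxT, hyxyx', hxx, hyy,
    mul_zero, zero_mul, mul_one, one_mul, TensorProduct.zero_tmul, TensorProduct.add_tmul,
    t1, LinearMap.coprod_apply,
    rext_w0 bb hbb, rext_w1 bb hbb, rext_w2 bb hbb, rext_w3 bb hbb, rext_w4 bb hbb,
    rext_w5 bb hbb, rext_w6 bb hbb, rext_w7 bb hbb,
    LinearMap.add_apply, LinearMap.prod_apply, LinearMap.zero_apply, Pi.prod, Function.prod,
    el, LinearMap.comp_apply, TensorProduct.mk_apply,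
    TensorProduct.tmul_add, TensorProduct.tmul_zero]

lemma Ty6 : t1 bb ((0, mon k 6 ⊗ₜ[k] (1 : A k)) + lmp k (y k) (Cm k 6)) = ((x k * y k) ⊗ₜ[k] y k + y k ⊗ₜ[k] (y k * x k), (y k * x k) ⊗ₜ[k] (1:A k) + (1:A k) ⊗ₜ[k] (x k * y k)) := by
  simp only [Cm, mon, vec8_0, vec8_1, vec8_2, vec8_3, vec8_4, vec8_5, vec8_6, vec8_7,
    lmp, lm, LinearMap.prodMap_apply, LinearMap.rTensor_tmul, LinearMap.mulLeft_apply,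
    Prod.mk_add_mk, map_add, map_zero, add_zero, zero_add,
    mul_assoc, A1, A1', A2, A2', A5, A5', A6, A6', hyxyxT, hyxyx', hxx, hyy,
    mul_zero, zero_mul, mul_one, one_mul, TensorProduct.zero_tmul, TensorProduct.add_tmul,
    t1, LinearMap.coprod_apply,
    rext_w0 bb hbb, rext_w1 bb hbb, rext_w2 bb hbb, rext_w3 bb hbb, rext_w4 bb hbb,
    rext_w5 bb hbb, rext_w6 bb hbb, rext_w7 bb hbb,
    LinearMap.add_apply, LinearMap.prod_apply, LinearMap.zero_apply, Pi.prod, Function.prod,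
    el, LinearMap.comp_apply, TensorProduct.mk_apply,
    TensorProduct.tmul_add, TensorProduct.tmul_zero]

lemma Tx7 : t1 bb ((mon k 7 ⊗ₜ[k] (1 : A k), 0) + lmp k (x k) (Cm k 7)) = ((1:A k) ⊗ₜ[k] (y k * (x k * y k)) + x k ⊗ₜ[k] x k + (y k * (x k * y k)) ⊗ₜ[k] (1:A k) + (1:A k) ⊗ₜ[k] (y k * (x k * y k)), (y k * x k) ⊗ₜ[k] (x k * y k) + (y k * x k) ⊗ₜ[k] (x k * y k)) := by
  simp only [Cm, mon, vec8_0, vec8_1, vec8_2, vec8_3, vec8_4, vec8_5, vec8_6, vec8_7,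
    lmp, lm, LinearMap.prodMap_apply, LinearMap.rTensor_tmul, LinearMap.mulLeft_apply,
    Prod.mk_add_mk, map_add, map_zero, add_zero, zero_add,
    mul_assoc, A1, A1', A2, A2', A5, A5', A6, A6', hyxyxT, hyxyx', hxx, hyy,
    mul_zero, zero_mul, mul_one, one_mul, TensorProduct.zero_tmul, TensorProduct.add_tmul,
    t1, LinearMap.coprod_apply,
    rext_w0 bb hbb, rext_w1 bb hbb, rext_w2 bb hbb, rext_w3 bb hbb, rext_w4 bb hbb,
    rext_w5 bb hbb, rext_w6 bb hbb, rext_w7 bb hbb,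
    LinearMap.add_apply, LinearMap.prod_apply, LinearMap.zero_apply, Pi.prod, Function.prod,
    el, LinearMap.comp_apply, TensorProduct.mk_apply,
    TensorProduct.tmul_add, TensorProduct.tmul_zero]

lemma Ty7 : t1 bb ((0, mon k 7 ⊗ₜ[k] (1 : A k)) + lmp k (y k) (Cm k 7)) = ((x k * y k) ⊗ₜ[k] (y k * x k) + (x k * y k) ⊗ₜ[k] (y k * x k), (1:A k) ⊗ₜ[k] (x k * (y k * x k)) + y k ⊗ₜ[k] y k + ((x k * (y k * x k)) ⊗ₜ[k] (1:A k) + (x k * (y k * x k)) ⊗ₜ[k] (1:A k))) := by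
  simp only [Cm, mon, vec8_0, vec8_1, vec8_2, vec8_3, vec8_4, vec8_5, vec8_6, vec8_7,
    lmp, lm, LinearMap.prodMap_apply, LinearMap.rTensor_tmul, LinearMap.mulLeft_apply,
    Prod.mk_add_mk, map_add, map_zero, add_zero, zero_add,
    mul_assoc, A1, A1', A2, A2', A5, A5', A6, A6', hyxyxT, hyxyx', hxx, hyy,
    mul_zero, zero_mul, mul_one, one_mul, TensorProduct.zero_tmul, TensorProduct.add_tmul,
    t1, LinearMap.coprod_apply,
    rext_w0 bb hbb, rext_w1 bb hbb, rext_w2 bb hbb, rext_w3 bb hbb, rext_w4 bb hbb,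
    rext_w5 bb hbb, rext_w6 bb hbb, rext_w7 bb hbb,
    LinearMap.add_apply, LinearMap.prod_apply, LinearMap.zero_apply, Pi.prod, Function.prod,
    el, LinearMap.comp_apply, TensorProduct.mk_apply,
    TensorProduct.tmul_add, TensorProduct.tmul_zero]

end QP
namespace QP
variable {k : Type} [Field k]

lemma honeone [CharP k 2] : (1:k) + 1 = 0 := by rw [one_add_one_eq_two]; exact two_zero

lemma nsmul2 [CharP k 2] (a : A k) : (2 : ℕ) • a = 0 := by
  rw [two_smul]; exact addself a
lemma zsmul2 [CharP k 2] (a : A k) : (2 : ℤ) • a = 0 := by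
  rw [two_zsmul]; exact addself a

lemma cobound (c : A k) :
    pairc k (x k * c + c * x k) (y k * c + c * y k) = (bimap k c).comp (d1 k) := by
  apply LinearMap.ext
  rintro ⟨p, q⟩
  have hsplit : ((p, q) : PP k) = (p, 0) + (0, q) := by simp
  rw [hsplit, map_add, map_add]
  clear hsplit
  congr 1
  · induction p using TensorProduct.induction_on with
    | zero => rw [Prod.mk_zero_zero, map_zero, map_zero]
    | tmul a b =>
      simp only [pairc, bimap, mulm, two, d1, LinearMap.coprod_apply, LinearMap.comp_apply,
        map_add, map_zero, TensorProduct.map_tmul, LinearMap.mul'_apply,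
        LinearMap.mulRight_apply, LinearMap.mulLeft_apply, add_zero, zero_add,
        LinearMap.add_apply]
      noncomm_ring
    | add u v hu hv =>
      have h2 : ((u + v, 0) : PP k) = ((u, 0) : PP k) + ((v, 0) : PP k) := by simp
      rw [h2, map_add, map_add, hu, hv]
  · induction q using TensorProduct.induction_on with
    | zero => rw [Prod.mk_zero_zero, map_zero, map_zero]
    | tmul a b =>
      simp only [pairc, bimap, mulm, two, d1, LinearMap.coprod_apply, LinearMap.comp_apply,
        map_add, map_zero, TensorProduct.map_tmul, LinearMap.mul'_apply,
        LinearMap.mulRight_apply, LinearMap.mulLeft_apply, add_zero, zero_add,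
        LinearMap.add_apply]
      noncomm_ring
    | add u v hu hv =>
      have h2 : ((0, u + v) : PP k) = ((0, u) : PP k) + ((0, v) : PP k) := by simp
      rw [h2, map_add, map_add, hu, hv]
end QP
namespace QP
variable {k : Type} [Field k] [CharP k 2] (bb : Module.Basis (Fin 8) k (A k))
  (hbb : ∀ i, bb i = mon k i)
include hbb

lemma case1 :
    pairc k
      (∑ i ∈ Finset.univ.erase (0 : Fin 8),
      bform bb
        (pairc k (y k) (x k) (t1 bb ((mon k i ⊗ₜ[k] (1 : A k), 0) + lmp k (x k) (Cm k i)))) 1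
        • dm k i)
      (∑ i ∈ Finset.univ.erase (0 : Fin 8),
      bform bb
        (pairc k (y k) (x k) (t1 bb ((0, mon k i ⊗ₜ[k] (1 : A k)) + lmp k (y k) (Cm k i)))) 1
        • dm k i)
      = (bimap k ((0 : A k))).comp (d1 k) := by
  rw [Finset.sum_erase_eq_sub (Finset.mem_univ (0 : Fin 8)),
    Finset.sum_erase_eq_sub (Finset.mem_univ (0 : Fin 8)),
    Fin.sum_univ_eight, Fin.sum_univ_eight,
    Tx0 bb hbb, Tx1 bb hbb, Tx2 bb hbb, Tx3 bb hbb, Tx4 bb hbb, Tx5 bb hbb, Tx6 bb hbb, Tx7 bb hbb, Ty0 bb hbb, Ty1 bb hbb, Ty2 bb hbb, Ty3 bb hbb, Ty4 bb hbb, Ty5 bb hbb, Ty6 bb hbb, Ty7 bb hbb]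
  refine Eq.trans (congrArg₂ (pairc k) ?_ ?_) (cobound ((0 : A k)))
  all_goals
    · simp only [pairc, bimap, mulm, two, LinearMap.coprod_apply, LinearMap.comp_apply,
        map_add, map_zero, TensorProduct.map_tmul, LinearMap.mul'_apply,
        LinearMap.mulRight_apply, LinearMap.mulLeft_apply, LinearMap.zero_apply,
        mul_assoc, A1, A1', A2, A2', A5, A5', A6, A6', hyxyxT, hyxyx', hxx, hyy,
        mul_zero, zero_mul, mul_one, one_mul, add_zero, zero_add,
        bform_add bb hbb, bform_zero bb hbb, bform_w0 bb hbb, bform_w1 bb hbb,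
        bform_w2 bb hbb, bform_w3 bb hbb, bform_w4 bb hbb, bform_w5 bb hbb,
        bform_w6 bb hbb, bform_w7 bb hbb,
        honeone, dm, mon, vec8_0, vec8_1, vec8_2, vec8_3, vec8_4, vec8_5, vec8_6, vec8_7,
        zero_smul, one_smul, smul_zero, sub_zero, sub_self]
      try abel_nf
      try simp only [nsmul2, zsmul2]

lemma case2 :
    pairc k
      (∑ i ∈ Finset.univ.erase (0 : Fin 8),
      bform bb
        (pairc k (x k) 0 (t1 bb ((mon k i ⊗ₜ[k] (1 : A k), 0) + lmp k (x k) (Cm k i)))) 1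
        • dm k i)
      (∑ i ∈ Finset.univ.erase (0 : Fin 8),
      bform bb
        (pairc k (x k) 0 (t1 bb ((0, mon k i ⊗ₜ[k] (1 : A k)) + lmp k (y k) (Cm k i)))) 1
        • dm k i)
      = (bimap k (y k)).comp (d1 k) := by
  rw [Finset.sum_erase_eq_sub (Finset.mem_univ (0 : Fin 8)),
    Finset.sum_erase_eq_sub (Finset.mem_univ (0 : Fin 8)),
    Fin.sum_univ_eight, Fin.sum_univ_eight,
    Tx0 bb hbb, Tx1 bb hbb, Tx2 bb hbb, Tx3 bb hbb, Tx4 bb hbb, Tx5 bb hbb, Tx6 bb hbb, Tx7 bb hbb, Ty0 bb hbb, Ty1 bb hbb, Ty2 bb hbb, Ty3 bb hbb, Ty4 bb hbb, Ty5 bb hbb, Ty6 bb hbb, Ty7 bb hbb]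
  refine Eq.trans (congrArg₂ (pairc k) ?_ ?_) (cobound (y k))
  all_goals
    · simp only [pairc, bimap, mulm, two, LinearMap.coprod_apply, LinearMap.comp_apply,
        map_add, map_zero, TensorProduct.map_tmul, LinearMap.mul'_apply,
        LinearMap.mulRight_apply, LinearMap.mulLeft_apply, LinearMap.zero_apply,
        mul_assoc, A1, A1', A2, A2', A5, A5', A6, A6', hyxyxT, hyxyx', hxx, hyy,
        mul_zero, zero_mul, mul_one, one_mul, add_zero, zero_add,
        bform_add bb hbb, bform_zero bb hbb, bform_w0 bb hbb, bform_w1 bb hbb,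
        bform_w2 bb hbb, bform_w3 bb hbb, bform_w4 bb hbb, bform_w5 bb hbb,
        bform_w6 bb hbb, bform_w7 bb hbb,
        honeone, dm, mon, vec8_0, vec8_1, vec8_2, vec8_3, vec8_4, vec8_5, vec8_6, vec8_7,
        zero_smul, one_smul, smul_zero, sub_zero, sub_self]
      try abel_nf
      try simp only [nsmul2, zsmul2]

lemma case3 :
    pairc k
      (∑ i ∈ Finset.univ.erase (0 : Fin 8),
      bform bb
        (pairc k 0 (y k) (t1 bb ((mon k i ⊗ₜ[k] (1 : A k), 0) + lmp k (x k) (Cm k i)))) 1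
        • dm k i)
      (∑ i ∈ Finset.univ.erase (0 : Fin 8),
      bform bb
        (pairc k 0 (y k) (t1 bb ((0, mon k i ⊗ₜ[k] (1 : A k)) + lmp k (y k) (Cm k i)))) 1
        • dm k i)
      = (bimap k (x k)).comp (d1 k) := by
  rw [Finset.sum_erase_eq_sub (Finset.mem_univ (0 : Fin 8)),
    Finset.sum_erase_eq_sub (Finset.mem_univ (0 : Fin 8)),
    Fin.sum_univ_eight, Fin.sum_univ_eight,
    Tx0 bb hbb, Tx1 bb hbb, Tx2 bb hbb, Tx3 bb hbb, Tx4 bb hbb, Tx5 bb hbb, Tx6 bb hbb, Tx7 bb hbb, Ty0 bb hbb, Ty1 bb hbb, Ty2 bb hbb, Ty3 bb hbb, Ty4 bb hbb, Ty5 bb hbb, Ty6 bb hbb, Ty7 bb hbb]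
  refine Eq.trans (congrArg₂ (pairc k) ?_ ?_) (cobound (x k))
  all_goals
    · simp only [pairc, bimap, mulm, two, LinearMap.coprod_apply, LinearMap.comp_apply,
        map_add, map_zero, TensorProduct.map_tmul, LinearMap.mul'_apply,
        LinearMap.mulRight_apply, LinearMap.mulLeft_apply, LinearMap.zero_apply,
        mul_assoc, A1, A1', A2, A2', A5, A5', A6, A6', hyxyxT, hyxyx', hxx, hyy,
        mul_zero, zero_mul, mul_one, one_mul, add_zero, zero_add,
        bform_add bb hbb, bform_zero bb hbb, bform_w0 bb hbb, bform_w1 bb hbb,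
        bform_w2 bb hbb, bform_w3 bb hbb, bform_w4 bb hbb, bform_w5 bb hbb,
        bform_w6 bb hbb, bform_w7 bb hbb,
        honeone, dm, mon, vec8_0, vec8_1, vec8_2, vec8_3, vec8_4, vec8_5, vec8_6, vec8_7,
        zero_smul, one_smul, smul_zero, sub_zero, sub_self]
      try abel_nf
      try simp only [nsmul2, zsmul2]

end QP
/-- For each of the 2-cocycles `v₁ = (y,x)`, `v₂ = (x,0)`, `v₂' = (0,y)` in
`Hom_{A^e}(P₂, A)`, the 1-cochain `Δ(v) ∈ Hom_{A^e}(P₁, A)` with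
`Δ(v)(1⊗x⊗1) = Σ_{b∈B∖{1}} ⟨v(t₁(b⊗x⊗1 + x·C(b))), 1⟩·b*` and
`Δ(v)(1⊗y⊗1) = Σ_{b∈B∖{1}} ⟨v(t₁(b⊗y⊗1 + y·C(b))), 1⟩·b*`
is a Hochschild coboundary, i.e. lies in the image of
`Hom_{A^e}(P₀,A) → Hom_{A^e}(P₁,A)`, `g ↦ g∘d₁` (elements of
`Hom_{A^e}(P₀,A)` being the maps `a⊗b ↦ a·c·b`).  Hence
`Δ(v₁) = Δ(v₂) = Δ(v₂') = 0` in `HH¹(A)`. -/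
theorem stmt_15 (k : Type) [Field k] [IsAlgClosed k] [CharP k 2]
    (bb : Module.Basis (Fin 8) k (A k)) (hbb : ∀ i, bb i = mon k i) :
    ∀ v : PP k →ₗ[k] A k,
      (v = pairc k (y k) (x k) ∨ v = pairc k (x k) 0 ∨ v = pairc k 0 (y k)) →
      ∃ c : A k,
        pairc k
          (∑ i ∈ Finset.univ.erase (0 : Fin 8),
            bform bb
              (v (t1 bb ((mon k i ⊗ₜ[k] (1 : A k), 0) + lmp k (x k) (Cm k i)))) 1
              • dm k i)
          (∑ i ∈ Finset.univ.erase (0 : Fin 8),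
            bform bb
              (v (t1 bb ((0, mon k i ⊗ₜ[k] (1 : A k)) + lmp k (y k) (Cm k i)))) 1
              • dm k i)
          = (bimap k c).comp (d1 k) := by
  intro v hv
  rcases hv with rfl | rfl | rfl
  · exact ⟨0, case1 bb hbb⟩
  · exact ⟨y k, case2 bb hbb⟩
  · exact ⟨x k, case3 bb hbb⟩
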